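/- Let X be a set, I : X → [0,∞], H̃ : X → ℝ, γ ≥ 0. Define s(u) = -inf{I(x) : H̃(x) = u}, s_γ(u) = s(u) - γu², E^u = {x : H̃(x) = u, I(x) = -s(u)}, and E_{β,γ} = {x : I(x) + βH̃(x) + γ[H̃(x)]² is minimized over X}. Fix u with s(u) > -∞ such that the infimum defining s(u) is attained. If s_γ has a strictly supporting line at u with slope β, then E^u = E_{β,γ}. -/

import Mathlib

open scoped ENNReal

/-- The microcanonical entropy `s(u) = -inf{I(x) : H̃(x) = u}` (with `inf ∅ = +∞`). -/
noncomputable def microEnt {X : Type*} (I : X → ℝ≥0∞) (H : X → ℝ) (u : ℝ) : EReal :=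
  -(⨅ x : {y : X // H y = u}, ((I x.1 : ℝ≥0∞) : EReal))

/-- Full equivalence of the microcanonical and Gaussian ensembles: if `s(u) > -∞`,
the infimum defining `s(u)` is attained, and `s_γ(v) = s(v) - γv²` has a strictly
supporting line at `u` with slope `β`, then `E^u = E_{β,γ}`. -/
theorem stmt10 {X : Type*} (I : X → ℝ≥0∞) (H : X → ℝ) (u β γ : ℝ) (hγ : 0 ≤ γ)
    (hfin : microEnt I H u ≠ ⊥)
    (hatt : ∃ x : X, H x = u ∧ (I x : EReal) = -(microEnt I H u))
    (hsupp : ∀ v : ℝ, v ≠ u →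
      microEnt I H v - ((γ * v ^ 2 : ℝ) : EReal) <
        microEnt I H u - ((γ * u ^ 2 : ℝ) : EReal) + ((β * (v - u) : ℝ) : EReal)) :
    {x : X | H x = u ∧ (I x : EReal) = -(microEnt I H u)} =
      {x : X | (I x : EReal) + ((β * H x + γ * (H x) ^ 2 : ℝ) : EReal) =
        ⨅ y : X, ((I y : EReal) + ((β * H y + γ * (H y) ^ 2 : ℝ) : EReal))} := by
  classical
  set m : EReal := ⨅ x : {y : X // H y = u}, ((I x.1 : ℝ≥0∞) : EReal) with hm
  have hmu : microEnt I H u = -m := rfl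
  have hnegmu : -(microEnt I H u) = m := by rw [hmu, neg_neg]
  obtain ⟨x₀, hx₀u, hx₀I⟩ := hatt
  rw [hnegmu] at hx₀I
  have hmbot : m ≠ ⊥ := by rw [← hx₀I]; exact EReal.coe_ennreal_ne_bot _
  have hmtop : m ≠ ⊤ := by
    intro h; apply hfin; rw [hmu, h]; rfl
  set c : ℝ := m.toReal with hcdef
  have hc : ((c : ℝ) : EReal) = m := EReal.coe_toReal hmtop hmbot
  -- the infimum over the fiber bounds I x below
  have hfiber : ∀ x : X, H x = u → m ≤ (I x : EReal) := fun x hx =>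
    iInf_le (fun z : {y : X // H y = u} => ((I z.1 : ℝ≥0∞) : EReal)) ⟨x, hx⟩
  set T : ℝ := c + β * u + γ * u ^ 2 with hT
  -- strict bound off the fiber
  have hstrict : ∀ x : X, H x ≠ u →
      ((T : ℝ) : EReal) < (I x : EReal) + ((β * H x + γ * (H x) ^ 2 : ℝ) : EReal) := by
    intro x hx
    set v : ℝ := H x with hv
    have h := hsupp v hx
    rw [hmu, ← hc] at h
    have hR : ((-c : ℝ) : EReal) - ((γ * u ^ 2 : ℝ) : EReal) + ((β * (v - u) : ℝ) : EReal)
        = ((-c - γ * u ^ 2 + β * (v - u) : ℝ) : EReal) := by norm_cast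
    rw [show (-((c:ℝ):EReal)) = ((-c : ℝ) : EReal) from (EReal.coe_neg c).symm, hR] at h
    -- h : microEnt I H v - γv² < coe r
    set infv : EReal := ⨅ z : {y : X // H y = v}, ((I z.1 : ℝ≥0∞) : EReal) with hinfv
    have hme : microEnt I H v = -infv := rfl
    rw [hme] at h
    have h2 : -infv < ((-c - γ * u ^ 2 + β * (v - u) + γ * v ^ 2 : ℝ) : EReal) := by
      have := (EReal.sub_lt_iff (c := -infv)
        (b := ((γ * v ^ 2 : ℝ) : EReal))
        (a := ((-c - γ * u ^ 2 + β * (v - u) : ℝ) : EReal))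
        (Or.inl (EReal.coe_ne_bot _)) (Or.inl (EReal.coe_ne_top _))).1 h
      calc -infv < ((-c - γ * u ^ 2 + β * (v - u) : ℝ) : EReal) + ((γ * v ^ 2 : ℝ) : EReal) := this
        _ = _ := by norm_cast
    have h3 : ((-(-c - γ * u ^ 2 + β * (v - u) + γ * v ^ 2) : ℝ) : EReal) < infv := by
      rw [EReal.coe_neg]
      exact EReal.neg_lt_comm.1 h2
    have h4 : ((-(-c - γ * u ^ 2 + β * (v - u) + γ * v ^ 2) : ℝ) : EReal) < (I x : EReal) :=
      lt_of_lt_of_le h3 (iInf_le (fun z : {y : X // H y = v} => ((I z.1 : ℝ≥0∞) : EReal)) ⟨x, rfl⟩)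
    have h5 := EReal.add_lt_add_right_coe h4 (β * v + γ * v ^ 2)
    calc ((T : ℝ) : EReal)
        = ((-(-c - γ * u ^ 2 + β * (v - u) + γ * v ^ 2) : ℝ) : EReal)
          + ((β * v + γ * v ^ 2 : ℝ) : EReal) := by
          rw [← EReal.coe_add, hT]; norm_cast; ring
      _ < (I x : EReal) + ((β * v + γ * v ^ 2 : ℝ) : EReal) := h5
  -- value at the minimizer
  have hFx₀ : (I x₀ : EReal) + ((β * H x₀ + γ * (H x₀) ^ 2 : ℝ) : EReal) = ((T : ℝ) : EReal) := by
    rw [hx₀u, hx₀I, ← hc, ← EReal.coe_add]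
    norm_cast
    ring
  -- lower bound everywhere
  have hlb : ∀ y : X, ((T : ℝ) : EReal) ≤ (I y : EReal) + ((β * H y + γ * (H y) ^ 2 : ℝ) : EReal) := by
    intro y
    by_cases hy : H y = u
    · rw [hy]
      have h1 : ((c : ℝ) : EReal) ≤ (I y : EReal) := hc ▸ hfiber y hy
      calc ((T : ℝ) : EReal) = ((c : ℝ) : EReal) + ((β * u + γ * u ^ 2 : ℝ) : EReal) := by
            rw [← EReal.coe_add]; norm_cast; ring
        _ ≤ (I y : EReal) + ((β * u + γ * u ^ 2 : ℝ) : EReal) := add_le_add_left h1 _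
    · exact (hstrict y hy).le
  have hInf : (⨅ y : X, ((I y : EReal) + ((β * H y + γ * (H y) ^ 2 : ℝ) : EReal))) = ((T : ℝ) : EReal) := by
    refine le_antisymm ?_ (le_iInf hlb)
    exact hFx₀ ▸ iInf_le _ x₀
  ext x
  simp only [Set.mem_setOf_eq, hnegmu, hInf]
  constructor
  · rintro ⟨hxu, hxI⟩
    rw [hxu, hxI, ← hc, ← EReal.coe_add]
    norm_cast
    ring
  · intro hx
    have hxu : H x = u := by
      by_contra hne
      exact (hstrict x hne).ne' hx
    refine ⟨hxu, ?_⟩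
    rw [hxu] at hx
    have h1 : m ≤ (I x : EReal) := hfiber x hxu
    rw [← hc] at h1 ⊢
    by_contra hne
    have hlt : ((c : ℝ) : EReal) < (I x : EReal) := lt_of_le_of_ne h1 (Ne.symm hne)
    have := EReal.add_lt_add_right_coe hlt (β * u + γ * u ^ 2)
    rw [hx] at this
    have hTc : ((T : ℝ) : EReal) = ((c : ℝ) : EReal) + ((β * u + γ * u ^ 2 : ℝ) : EReal) := by
      rw [← EReal.coe_add]; norm_cast; ring
    rw [hTc] at this
    exact lt_irrefl _ this
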